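/- Let V be a finite vertex type, E : V → V → Prop an edge relation, and T a set of paths of (V, E) such that every prime path of (V, E) is a subpath of some member of T. Then every simple path of (V, E) is a subpath of some member of T; that is, prime path coverage subsumes coverage of all simple paths. -/

import Mathlib

/-- A (directed) path in the graph `(V, E)`: a nonempty list of vertices in which
consecutive vertices are related by the edge relation `E`. -/
def IsPath {V : Type*} (E : V → V → Prop) (l : List V) : Prop :=
  l ≠ [] ∧ l.Chain' E

/-- A simple path: a path in which no vertex occurs more than once,
except that the first and last vertices may coincide. -/
def IsSimplePath {V : Type*} (E : V → V → Prop) (l : List V) : Prop :=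
  IsPath E l ∧ l.dropLast.Nodup ∧ l.tail.Nodup

/-- A closed path: it has at least two vertices and its first and last vertices coincide. -/
def IsClosedPath {V : Type*} (l : List V) : Prop :=
  2 ≤ l.length ∧ l.head? = l.getLast?

/-- A prime path: a maximal simple path, i.e. a simple path that is not a proper
subpath (contiguous sublist) of any simple path. -/
def IsPrimePath {V : Type*} (E : V → V → Prop) (l : List V) : Prop :=
  IsSimplePath E l ∧ ∀ q : List V, IsSimplePath E q → l <:+: q → l = q

/-- If a set `T` of paths covers every prime path (as a subpath), then it covers
every simple path: prime path coverage subsumes coverage of all simple paths. -/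
theorem primePath_coverage_subsumes_simplePath_coverage {V : Type*} [Fintype V]
    (E : V → V → Prop) (T : Set (List V)) (hT : ∀ t ∈ T, IsPath E t)
    (hcov : ∀ p : List V, IsPrimePath E p → ∃ t ∈ T, p <:+: t) :
    ∀ p : List V, IsSimplePath E p → ∃ t ∈ T, p <:+: t := by
  have hbound : ∀ p : List V, IsSimplePath E p → p.length ≤ Fintype.card V + 1 := by
    intro p hp
    have hnd := hp.2.1
    have h1 : p.dropLast.length ≤ Fintype.card V := hnd.length_le_card
    have h2 : p.length ≤ p.dropLast.length + 1 := by
      rw [List.length_dropLast]; omega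
    omega
  have key : ∀ n : ℕ, ∀ p : List V, IsSimplePath E p →
      Fintype.card V + 1 - p.length ≤ n → ∃ t ∈ T, p <:+: t := by
    intro n
    induction n with
    | zero =>
      intro p hp hlen
      apply hcov
      refine ⟨hp, fun q hq hpq => ?_⟩
      have hq1 := hbound q hq
      have := hpq.sublist.length_le
      have hp1 := hbound p hp
      exact List.Sublist.eq_of_length hpq.sublist (by omega)
    | succ n ih =>
      intro p hp hlen
      by_cases hprime : IsPrimePath E p
      · exact hcov p hprime
      · simp only [IsPrimePath, not_and, not_forall] at hprime
        obtain ⟨q, hq, hpq, hne⟩ := hprime hp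
        have hlt : p.length < q.length := by
          have := hpq.sublist.length_le
          rcases lt_or_eq_of_le this with h | h
          · exact h
          · exact absurd (List.Sublist.eq_of_length hpq.sublist h) hne
        have hq1 := hbound q hq
        obtain ⟨t, htT, hqt⟩ := ih q hq (by omega)
        exact ⟨t, htT, hpq.trans hqt⟩
  intro p hp
  exact key (Fintype.card V + 1 - p.length) p hp le_rfl
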